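/- For complex parameters b, c (not non-positive integers) and complex z, the product of two confluent-limit hypergeometric functions satisfies ₀F₁(;b;z) · ₀F₁(;c;z) = ₂F₃((b+c-1)/2, (b+c)/2; b, c, b+c-1; 4z), as an identity of formal power series in z (equivalently of entire functions of z). -/

import Mathlib

open Finset Filter

noncomputable def Pe (x : ℂ) (n : ℕ) : ℂ := (ascPochhammer ℂ n).eval x

lemma Pe_def (x : ℂ) (n : ℕ) : (ascPochhammer ℂ n).eval x = Pe x n := rfl

lemma Pe_succ (x : ℂ) (n : ℕ) : Pe x (n+1) = Pe x n * (x + n) := ascPochhammer_succ_eval n x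

lemma Pe_add (x : ℂ) (m n : ℕ) : Pe x (m + n) = Pe x m * Pe (x + m) n := by
  have h := congrArg (Polynomial.eval x) (ascPochhammer_mul (S := ℂ) m n)
  simp only [Polynomial.eval_mul, Polynomial.eval_comp, Polynomial.eval_add,
    Polynomial.eval_X, Polynomial.eval_natCast] at h
  exact h.symm

lemma Pe_ne_zero {x : ℂ} (hx : ∀ k : ℕ, x ≠ -(k : ℂ)) (n : ℕ) : Pe x n ≠ 0 := by
  induction n with
  | zero => simp [Pe]
  | succ n ih => rw [Pe_succ]; exact mul_ne_zero ih (fun h => hx n (by linear_combination h))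

lemma key : ∀ n : ℕ, ∀ b c : ℂ,
    ∑ k ∈ range (n+1), (n.choose k : ℂ) * (Pe (b + k) (n - k) * Pe (c + ((n - k : ℕ) : ℂ)) k)
      = Pe (b + c + n - 1) n := by
  intro n
  induction n with
  | zero => intro b c; simp [Pe]
  | succ n ih =>
    intro b c
    rw [Finset.sum_range_succ']
    have pascal : ∀ k ∈ range (n+1), ((n+1).choose (k+1) : ℂ) *
        (Pe (b + (k+1 : ℕ)) (n + 1 - (k+1)) * Pe (c + ((n + 1 - (k+1) : ℕ) : ℂ)) (k+1)) =
        (n.choose k : ℂ) * (Pe (b + (k+1 : ℕ)) (n - k) * Pe (c + ((n - k : ℕ) : ℂ)) (k+1)) +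
        (n.choose (k+1) : ℂ) * (Pe (b + (k+1 : ℕ)) (n - k) * Pe (c + ((n - k : ℕ) : ℂ)) (k+1)) := by
      intro k hk
      rw [Nat.choose_succ_succ, Nat.cast_add]
      have : n + 1 - (k+1) = n - k := by omega
      rw [this]; ring
    rw [Finset.sum_congr rfl pascal, Finset.sum_add_distrib]
    have hB : ∑ k ∈ range (n+1), (n.choose k : ℂ) *
        (Pe (b + ((k:ℕ)+1 : ℕ)) (n - k) * Pe (c + ((n - k : ℕ) : ℂ)) (k+1)) =
        (c + n) * ∑ k ∈ range (n+1), (n.choose k : ℂ) *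
          (Pe ((b+1) + k) (n - k) * Pe (c + ((n - k : ℕ) : ℂ)) k) := by
      rw [Finset.mul_sum]
      refine Finset.sum_congr rfl fun k hk => ?_
      have hkn : k ≤ n := Nat.lt_succ_iff.mp (mem_range.mp hk)
      rw [Pe_succ]
      have h1 : (b + ((k:ℕ)+1 : ℕ) : ℂ) = (b+1) + k := by push_cast; ring
      have h2 : (c + ((n - k : ℕ) : ℂ) + k) = c + n := by
        rw [Nat.cast_sub hkn]; ring
      rw [h1, h2]; ring
    have hA : ∑ k ∈ range (n+1), (n.choose (k+1) : ℂ) *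
          (Pe (b + ((k:ℕ)+1 : ℕ)) (n - k) * Pe (c + ((n - k : ℕ) : ℂ)) (k+1)) +
        ((n+1).choose 0 : ℂ) * (Pe (b + ((0:ℕ):ℂ)) (n + 1 - 0) * Pe (c + ((n + 1 - 0 : ℕ) : ℂ)) 0) =
        (b + n) * ∑ k ∈ range (n+1), (n.choose k : ℂ) *
          (Pe (b + k) (n - k) * Pe ((c+1) + ((n - k : ℕ) : ℂ)) k) := by
      have e1 : ∑ k ∈ range (n+1), (n.choose (k+1) : ℂ) *
          (Pe (b + ((k:ℕ)+1 : ℕ)) (n - k) * Pe (c + ((n - k : ℕ) : ℂ)) (k+1)) +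
          ((n+1).choose 0 : ℂ) * (Pe (b + ((0:ℕ):ℂ)) (n + 1 - 0) * Pe (c + ((n + 1 - 0 : ℕ) : ℂ)) 0) =
          ∑ k ∈ range (n+2), (n.choose k : ℂ) *
            (Pe (b + k) (n + 1 - k) * Pe (c + ((n + 1 - k : ℕ) : ℂ)) k) := by
        rw [Finset.sum_range_succ' (fun k => (n.choose k : ℂ) *
            (Pe (b + k) (n + 1 - k) * Pe (c + ((n + 1 - k : ℕ) : ℂ)) k)) (n+1)]
        congr 1
        · refine Finset.sum_congr rfl fun k hk => ?_
          have h : n + 1 - (k+1) = n - k := by omega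
          rw [h]
        · simp
      rw [e1, Finset.sum_range_succ]
      simp only [Nat.choose_succ_self, Nat.cast_zero, zero_mul, add_zero]
      rw [Finset.mul_sum]
      refine Finset.sum_congr rfl fun k hk => ?_
      have hkn : k ≤ n := Nat.lt_succ_iff.mp (mem_range.mp hk)
      have h : n + 1 - k = (n - k) + 1 := by omega
      rw [h, Pe_succ]
      have h2 : (b + k + ((n - k : ℕ) : ℂ)) = b + n := by rw [Nat.cast_sub hkn]; ring
      have h3 : (c + (((n - k) + 1 : ℕ) : ℂ)) = (c+1) + ((n - k : ℕ) : ℂ) := by push_cast; ring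
      rw [h2, h3]; ring
    rw [hB, add_assoc, hA, ih, ih]
    have e2 : (b+1) + c + n - 1 = b + c + n := by ring
    have e3 : b + (c+1) + n - 1 = b + c + n := by ring
    have e4 : b + c + ((n+1 : ℕ) : ℂ) - 1 = b + c + n := by push_cast; ring
    rw [e2, e3, e4, Pe_succ]
    ring

lemma dup (x : ℂ) (n : ℕ) : Pe (x/2) n * Pe ((x+1)/2) n * 4^n = Pe x (2*n) := by
  induction n with
  | zero => simp [Pe]
  | succ n ih =>
    have h2 : 2*(n+1) = (2*n+1)+1 := by ring
    rw [h2, Pe_succ, Pe_succ, Pe_succ, Pe_succ]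
    push_cast
    linear_combination ((x + 2*n) * (x + 2*n + 1)) * ih

lemma summable0F1 (x z : ℂ) (hx : ∀ k : ℕ, x ≠ -(k : ℂ)) :
    Summable (fun k : ℕ => ‖1 / Pe x k * z ^ k / (k.factorial : ℂ)‖) := by
  rw [summable_norm_iff]
  apply summable_of_ratio_norm_eventually_le (r := 1/2) (by norm_num)
  rw [eventually_atTop]
  refine ⟨⌈‖x‖ + 2*‖z‖⌉₊ + 1, fun k hk => ?_⟩
  have hk' : (‖x‖ + 2*‖z‖ + 1 : ℝ) ≤ k := by
    have h1 := Nat.le_ceil (‖x‖ + 2*‖z‖)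
    have h2 : (⌈‖x‖ + 2*‖z‖⌉₊ + 1 : ℝ) ≤ k := by exact_mod_cast Nat.cast_le.mpr hk
    linarith
  have hxk : (x + k) ≠ 0 := fun h => hx k (by linear_combination h)
  have hPk : Pe x k ≠ 0 := Pe_ne_zero hx k
  have hfk : (k.factorial : ℂ) ≠ 0 := Nat.cast_ne_zero.mpr k.factorial_ne_zero
  have hfr : 1 / Pe x (k+1) * z ^ (k+1) / ((k+1).factorial : ℂ) =
      (1 / Pe x k * z ^ k / (k.factorial : ℂ)) * (z / ((x + k) * ((k:ℂ)+1))) := by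
    rw [Pe_succ, pow_succ, Nat.factorial_succ]
    push_cast
    field_simp
  rw [hfr, norm_mul]
  have h1 : (2*‖z‖+1 : ℝ) ≤ ‖x + k‖ := by
    have hkk : ‖((k:ℕ) : ℂ)‖ = (k : ℝ) := by
      rw [Complex.norm_natCast]
    have h3 : (k : ℝ) ≤ ‖x + k‖ + ‖x‖ := by
      calc (k : ℝ) = ‖((k:ℕ) : ℂ)‖ := hkk.symm
        _ = ‖(x + k) + (-x)‖ := by congr 1; ring
        _ ≤ ‖x + k‖ + ‖(-x)‖ := norm_add_le _ _
        _ = ‖x + k‖ + ‖x‖ := by rw [norm_neg]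
    linarith
  have h2 : ((k:ℝ)+1) = ‖((k:ℂ)+1)‖ := by
    rw [show ((k:ℂ)+1) = (((k+1:ℕ)) : ℂ) by push_cast; ring, Complex.norm_natCast]
    push_cast; ring
  have hd : ‖z / ((x + k) * ((k:ℂ)+1))‖ ≤ 1/2 := by
    rw [norm_div, norm_mul, ← h2]
    rw [div_le_iff₀ (by nlinarith [norm_nonneg z])]
    nlinarith [norm_nonneg z, norm_nonneg x]
  calc ‖1 / Pe x k * z ^ k / (k.factorial : ℂ)‖ * ‖z / ((x + k) * ((k:ℂ)+1))‖
      ≤ ‖1 / Pe x k * z ^ k / (k.factorial : ℂ)‖ * (1/2) :=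
        mul_le_mul_of_nonneg_left hd (norm_nonneg _)
    _ = 1/2 * ‖1 / Pe x k * z ^ k / (k.factorial : ℂ)‖ := by ring

lemma finite_id (b c z : ℂ)
    (hb : ∀ k : ℕ, b ≠ -(k : ℂ)) (hc : ∀ k : ℕ, c ≠ -(k : ℂ))
    (hbc : ∀ k : ℕ, b + c - 1 ≠ -(k : ℂ)) (n : ℕ) :
    ∑ k ∈ range (n+1),
        (1 / Pe b k * z ^ k / (k.factorial : ℂ)) *
        (1 / Pe c (n-k) * z ^ (n-k) / ((n-k).factorial : ℂ)) =
      Pe ((b+c-1)/2) n * Pe ((b+c)/2) n / (Pe b n * (Pe c n * Pe (b+c-1) n)) *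
        (4*z) ^ n / (n.factorial : ℂ) := by
  have hPb := Pe_ne_zero hb
  have hPc := Pe_ne_zero hc
  have hPd := Pe_ne_zero hbc
  have hfn : (n.factorial : ℂ) ≠ 0 := Nat.cast_ne_zero.mpr n.factorial_ne_zero
  have h1 : ∀ k ∈ range (n+1),
      (1 / Pe b k * z ^ k / (k.factorial : ℂ)) *
        (1 / Pe c (n-k) * z ^ (n-k) / ((n-k).factorial : ℂ)) =
      ((n.choose k : ℂ) * (Pe (b + k) (n - k) * Pe (c + ((n - k : ℕ) : ℂ)) k)) /
        (Pe b n * Pe c n * (n.factorial : ℂ)) * z ^ n := by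
    intro k hk
    have hkn : k ≤ n := Nat.lt_succ_iff.mp (mem_range.mp hk)
    have hbn : Pe b n = Pe b k * Pe (b + k) (n-k) := by
      conv_lhs => rw [show n = k + (n-k) by omega]
      rw [Pe_add]
    have hcn : Pe c n = Pe c (n-k) * Pe (c + ((n - k : ℕ) : ℂ)) k := by
      conv_lhs => rw [show n = (n-k) + k by omega]
      rw [Pe_add]
    have hfac : (n.factorial : ℂ) = (n.choose k : ℂ) * k.factorial * (n-k).factorial := by
      rw [← Nat.choose_mul_factorial_mul_factorial hkn]; push_cast; ring
    have hzn : z ^ n = z ^ k * z ^ (n-k) := by rw [← pow_add]; congr 1; omega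
    have hk1 : Pe b k ≠ 0 := Pe_ne_zero hb k
    have hk2 : Pe c (n-k) ≠ 0 := Pe_ne_zero hc (n-k)
    have hk3 : (k.factorial : ℂ) ≠ 0 := Nat.cast_ne_zero.mpr k.factorial_ne_zero
    have hk4 : ((n-k).factorial : ℂ) ≠ 0 := Nat.cast_ne_zero.mpr (n-k).factorial_ne_zero
    have hch : ((n.choose k : ℕ) : ℂ) ≠ 0 := Nat.cast_ne_zero.mpr (Nat.choose_pos hkn).ne'
    have hk5 : Pe (b + k) (n-k) ≠ 0 := by
      refine Pe_ne_zero (fun j h => hb (k+j) ?_) _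
      push_cast
      linear_combination h
    have hk6 : Pe (c + ((n - k : ℕ) : ℂ)) k ≠ 0 := by
      refine Pe_ne_zero (fun j h => hc ((n-k)+j) ?_) _
      rw [Nat.cast_sub hkn] at h
      push_cast [Nat.cast_sub hkn]
      linear_combination h
    set B := Pe (b + (k:ℂ)) (n-k) with hBdef
    set C := Pe (c + ((n - k : ℕ) : ℂ)) k with hCdef
    rw [hbn, hcn, hfac, hzn]
    field_simp
  rw [Finset.sum_congr rfl h1, ← Finset.sum_mul, ← Finset.sum_div, key]
  have hAB : Pe ((b+c-1)/2) n * Pe ((b+c)/2) n * 4^n = Pe (b+c-1) n * Pe (b + c + n - 1) n := by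
    have h := dup (b+c-1) n
    rw [show ((b+c-1)+1)/2 = (b+c)/2 by ring] at h
    rw [h, two_mul, Pe_add]
    congr 2
    ring
  have h4 : (4:ℂ)^n ≠ 0 := pow_ne_zero n (by norm_num)
  have hPb' : Pe b n ≠ 0 := hPb n
  have hPc' : Pe c n ≠ 0 := hPc n
  have hPd' : Pe (b+c-1) n ≠ 0 := hPd n
  rw [mul_pow]
  field_simp
  linear_combination (-(z^n)) * hAB


/-- The generalized hypergeometric series `ₚF_q(a; b; z)` with upper parameter list `a`
and lower parameter list `b`, `Σ_{k≥0} ∏(aᵢ)_k / (∏(bⱼ)_k k!) z^k`. -/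
noncomputable def hyp (a b : List ℂ) (z : ℂ) : ℂ :=
  ∑' k : ℕ, ((a.map (fun p => (ascPochhammer ℂ k).eval p)).prod /
    (b.map (fun p => (ascPochhammer ℂ k).eval p)).prod) * z ^ k / (k.factorial : ℂ)

theorem hyp0F1_mul_hyp0F1 (b c z : ℂ)
    (hb : ∀ k : ℕ, b ≠ -(k : ℂ)) (hc : ∀ k : ℕ, c ≠ -(k : ℂ))
    (hbc : ∀ k : ℕ, b + c - 1 ≠ -(k : ℂ)) :
    hyp [] [b] z * hyp [] [c] z =
      hyp [(b + c - 1) / 2, (b + c) / 2] [b, c, b + c - 1] (4 * z) := by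
  simp only [hyp, List.map_nil, List.prod_nil, List.map_cons, List.prod_cons, mul_one, Pe_def]
  rw [tsum_mul_tsum_eq_tsum_sum_antidiagonal_of_summable_norm
    (summable0F1 b z hb) (summable0F1 c z hc)]
  refine tsum_congr fun n => ?_
  rw [Finset.Nat.sum_antidiagonal_eq_sum_range_succ_mk]
  exact finite_id b c z hb hc hbc n
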